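/- Let d ≥ 2 and a ∈ ℂ^d∖{0}. Then at least one of the following holds: (i) #Ω_div^{−1}(a) ≤ 3·μ^{d−2}; (ii) there exists j ∈ {1,…,d} such that Ω_div^{−1}(a) = {γ ∈ G∖{0} : γ_j = 0}; (iii) there exist j₁ ≠ j₂ in {1,…,d} such that Ω_div^{−1}(a) = {γ ∈ G∖{0} : γ_{j₁} = γ_{j₂}}. Here Ω_div^{−1}(a) = {γ ∈ G∖{0} : a ∈ Ω_div(γ)}. -/

import Mathlib

open Finset

noncomputable section

namespace TracePaper

/-- The group `G = (ℤ/μ)^d`. -/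
abbrev Gp (μ d : ℕ) : Type := Fin d → ZMod μ

/-- The character value `e^{2πi z/μ}` for `z ∈ ℤ/μ` (via the representative `z.val`). -/
def ch (μ : ℕ) (z : ZMod μ) : ℂ :=
  Complex.exp (2 * Real.pi * Complex.I * (z.val : ℂ) / (μ : ℂ))

/-- `Ω_div⁻¹(a) = {γ ∈ G \ {0} : a ∈ Ω_div(γ)}`, where
`Ω_div(γ) = {ζ ∈ ℂ^d : ∑_j ζ_j (e^{2πiγ_j/μ}-1) = 0}`. -/
def OmDivInv (μ d : ℕ) (a : Fin d → ℂ) : Set (Gp μ d) :=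
  {γ | γ ≠ 0 ∧ ∑ j, a j * (ch μ (γ j) - 1) = 0}

lemma ch_eq_pow (μ : ℕ) (z : ZMod μ) :
    ch μ z = Complex.exp (2 * Real.pi * Complex.I / μ) ^ z.val := by
  rw [ch, ← Complex.exp_nat_mul]
  ring_nf

lemma ch_zero (μ : ℕ) [NeZero μ] : ch μ 0 = 1 := by
  rw [ch_eq_pow, ZMod.val_zero, pow_zero]

lemma ch_injective (μ : ℕ) [NeZero μ] : Function.Injective (ch μ) := by
  intro x y h
  rw [ch_eq_pow, ch_eq_pow] at h
  have hprim := Complex.isPrimitiveRoot_exp μ (NeZero.ne μ)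
  have := hprim.pow_inj (ZMod.val_lt x) (ZMod.val_lt y) h
  exact ZMod.val_injective μ this

lemma abs_ch (μ : ℕ) [NeZero μ] (z : ZMod μ) : ‖ch μ z‖ = 1 := by
  rw [ch_eq_pow, norm_pow]
  have hprim := Complex.isPrimitiveRoot_exp μ (NeZero.ne μ)
  have h1 : ‖Complex.exp (2 * Real.pi * Complex.I / μ)‖ ^ μ = 1 := by
    rw [← norm_pow, hprim.pow_eq_one, norm_one]
  have h0 : (0:ℝ) ≤ ‖Complex.exp (2 * Real.pi * Complex.I / μ)‖ :=
    norm_nonneg _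
  have : ‖Complex.exp (2 * Real.pi * Complex.I / μ)‖ = 1 := by
    rcases pow_eq_one_iff_cases.mp h1 with h|h|h
    · exact absurd h (NeZero.ne μ)
    · exact h
    · nlinarith
  rw [this, one_pow]

/-- Two distinct circles intersect in at most two points. -/
lemma two_circles (r s : ℝ) (c : ℂ) (hc : c ≠ 0) :
    ∃ w₁ w₂ : ℂ, ∀ z : ℂ, ‖z‖ = r → ‖z - c‖ = s → z = w₁ ∨ z = w₂ := by
  set t : ℝ := (r^2 + Complex.normSq c - s^2) / 2 with ht
  set y : ℝ := Real.sqrt (r^2 * Complex.normSq c - t^2) with hy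
  refine ⟨((t : ℂ) + (y:ℂ) * Complex.I) * c / (Complex.normSq c : ℂ),
         ((t : ℂ) - (y:ℂ) * Complex.I) * c / (Complex.normSq c : ℂ), ?_⟩
  intro z h1 h2
  have hns : Complex.normSq c ≠ 0 := by
    simpa [Complex.normSq_eq_zero] using hc
  set u : ℂ := z * (starRingEnd ℂ) c with hu
  have e1 : Complex.normSq z = r^2 := by rw [← Complex.sq_norm, h1]
  have e2 : Complex.normSq (z - c) = s^2 := by rw [← Complex.sq_norm, h2]
  have hre : u.re = t := by
    have := Complex.normSq_sub z c
    rw [e1, e2] at this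
    rw [ht, ← hu] at *
    linarith
  have hnsu : Complex.normSq u = r^2 * Complex.normSq c := by
    rw [hu, Complex.normSq_mul, Complex.normSq_conj, e1]
  have him2 : u.im^2 = r^2 * Complex.normSq c - t^2 := by
    have h3 : Complex.normSq u = u.re*u.re + u.im*u.im := Complex.normSq_apply u
    rw [hnsu, hre] at h3
    nlinarith
  have hynn : (0:ℝ) ≤ r^2 * Complex.normSq c - t^2 := by nlinarith [sq_nonneg u.im]
  have hy2 : y^2 = u.im^2 := by rw [hy, Real.sq_sqrt hynn, him2]
  have him : u.im = y ∨ u.im = -y := by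
    have h4 : (u.im - y) * (u.im + y) = 0 := by nlinarith
    rcases mul_eq_zero.1 h4 with h|h
    · left; linarith
    · right; linarith
  have hz : z = u * c / (Complex.normSq c : ℂ) := by
    have huc : u * c = z * (Complex.normSq c : ℂ) := by
      rw [hu, mul_assoc, mul_comm ((starRingEnd ℂ) c) c, Complex.mul_conj]
    rw [huc, mul_div_assoc, div_self (by exact_mod_cast hns), mul_one]
  have hue : u = (u.re : ℂ) + (u.im : ℂ) * Complex.I := (Complex.re_add_im u).symm
  rcases him with h|h
  · left; rw [hz, hue, hre, h]
  · right; rw [hz, hue, hre, h]; push_cast; ring_nf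

/-- Splitting a sum over `Fin d` at two distinguished indices. -/
lemma sum_split {d : ℕ} (f : Fin d → ℂ) (j1 j2 : Fin d) (h : j1 ≠ j2) :
    ∑ j, f j = (∑ k : {k : Fin d // k ≠ j1 ∧ k ≠ j2}, f k.1) + f j1 + f j2 := by
  classical
  rw [← Finset.sum_filter_add_sum_filter_not Finset.univ (fun j => j ≠ j1 ∧ j ≠ j2) f]
  have h1 : ∑ j ∈ Finset.univ.filter (fun j => j ≠ j1 ∧ j ≠ j2), f j
      = ∑ k : {k : Fin d // k ≠ j1 ∧ k ≠ j2}, f k.1 :=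
    Finset.sum_subtype _ (by simp) f
  have h2 : Finset.univ.filter (fun j : Fin d => ¬(j ≠ j1 ∧ j ≠ j2)) = {j1, j2} := by
    ext k; simp; tauto
  rw [h1, h2, Finset.sum_pair h, add_assoc]

/-- Lemma `DivFibers`: for every `a ∈ ℂ^d \ {0}`, either
`#Ω_div⁻¹(a) ≤ 3 μ^{d-2}`, or `Ω_div⁻¹(a)` is a coordinate hyperplane `{γ : γ_j = 0}`, or a
diagonal hyperplane `{γ : γ_{j₁} = γ_{j₂}}`. -/
theorem statement17 (μ d : ℕ) [NeZero μ] (hμ : 2 ≤ μ) (hd : 2 ≤ d)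
    (a : Fin d → ℂ) (ha : a ≠ 0) :
    (OmDivInv μ d a).ncard ≤ 3 * μ ^ (d - 2) ∨
      (∃ j : Fin d, OmDivInv μ d a = {γ : Gp μ d | γ ≠ 0 ∧ γ j = 0}) ∨
      (∃ j₁ j₂ : Fin d, j₁ ≠ j₂ ∧
        OmDivInv μ d a = {γ : Gp μ d | γ ≠ 0 ∧ γ j₁ = γ j₂}) := by
  classical
  by_cases h1 : ∃ j, ∀ k, k ≠ j → a k = 0
  · -- exactly one nonzero coordinate: coordinate hyperplane
    obtain ⟨j, hj⟩ := h1
    have haj : a j ≠ 0 := by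
      intro h0
      apply ha
      funext k
      by_cases hk : k = j
      · rw [hk]; exact h0
      · exact hj k hk
    right; left
    refine ⟨j, ?_⟩
    ext γ
    simp only [OmDivInv, Set.mem_setOf_eq, and_congr_right_iff]
    intro _
    rw [Finset.sum_eq_single j (fun k _ hk => by rw [hj k hk, zero_mul]) (by simp)]
    constructor
    · intro h
      have h' : ch μ (γ j) - 1 = 0 := by
        rcases mul_eq_zero.1 h with h|h
        · exact absurd h haj
        · exact h
      have : ch μ (γ j) = ch μ 0 := by rw [ch_zero]; linear_combination h'
      exact ch_injective μ this
    · intro h; rw [h, ch_zero]; ring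
  · -- at least two nonzero coordinates
    push_neg at h1
    have hne : ∃ j, a j ≠ 0 := by
      by_contra h
      push_neg at h
      exact ha (funext fun j => h j)
    obtain ⟨j1, ha1⟩ := hne
    obtain ⟨j2, hj12', ha2⟩ := h1 j1
    have hj12 : j1 ≠ j2 := fun h => hj12' h.symm
    by_cases h2 : (∀ k, k ≠ j1 → k ≠ j2 → a k = 0) ∧ a j1 + a j2 = 0
    · -- diagonal hyperplane
      obtain ⟨hothers, hsum⟩ := h2
      right; right
      refine ⟨j1, j2, hj12, ?_⟩
      ext γ
      simp only [OmDivInv, Set.mem_setOf_eq, and_congr_right_iff]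
      intro _
      rw [sum_split (fun j => a j * (ch μ (γ j) - 1)) j1 j2 hj12]
      have hz : (∑ k : {k : Fin d // k ≠ j1 ∧ k ≠ j2}, a k.1 * (ch μ (γ k.1) - 1)) = 0 := by
        apply Finset.sum_eq_zero
        intro k _
        rw [hothers k.1 k.2.1 k.2.2, zero_mul]
      have ha2' : a j2 = -a j1 := by linear_combination hsum
      rw [hz, zero_add]
      constructor
      · intro h
        apply ch_injective μ
        have : a j1 * (ch μ (γ j1) - ch μ (γ j2)) = 0 := by
          rw [ha2'] at h; linear_combination h
        rcases mul_eq_zero.1 this with h'|h'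
        · exact absurd h' ha1
        · linear_combination h'
      · intro h
        rw [h, ha2']; ring
    · -- counting case
      left
      push_neg at h2
      -- notation
      have hS : OmDivInv μ d a = ↑(Finset.univ.filter (· ∈ OmDivInv μ d a)) := by
        ext γ; simp
      rw [hS, Set.ncard_coe_finset]
      set S : Finset (Gp μ d) := Finset.univ.filter (· ∈ OmDivInv μ d a) with hSdef
      set π : Gp μ d → ({k : Fin d // k ≠ j1 ∧ k ≠ j2} → ZMod μ) :=
        fun γ k => γ k.1 with hπ
      set cc : ({k : Fin d // k ≠ j1 ∧ k ≠ j2} → ZMod μ) → ℂ :=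
        fun t => (∑ j, a j) - ∑ k : {k : Fin d // k ≠ j1 ∧ k ≠ j2}, a k.1 * ch μ (t k) with hcc
      -- key identity on the solution set
      have key : ∀ γ ∈ S, a j1 * ch μ (γ j1) + a j2 * ch μ (γ j2) = cc (π γ) := by
        intro γ hγ
        have hγ2 : ∑ j, a j * (ch μ (γ j) - 1) = 0 := by
          simp only [hSdef, Finset.mem_filter] at hγ
          exact hγ.2.2
        have hγ3 : ∑ j, a j * ch μ (γ j) = ∑ j, a j := by
          have h5 : ∑ j, (a j * ch μ (γ j) - a j) = 0 := by
            rw [← hγ2]; exact Finset.sum_congr rfl fun j _ => by ring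
          rw [Finset.sum_sub_distrib] at h5
          linear_combination h5
        rw [sum_split (fun j => a j * ch μ (γ j)) j1 j2 hj12] at hγ3
        simp only [hcc, hπ]
        linear_combination hγ3
      -- every fiber of π over S has at most μ elements
      have fib_le : ∀ t, (S.filter (fun γ => π γ = t)).card ≤ μ := by
        intro t
        have hcard : (S.filter (fun γ => π γ = t)).card ≤ (Finset.univ : Finset (ZMod μ)).card := by
          apply Finset.card_le_card_of_injOn (fun γ => γ j2) (fun _ _ => Finset.mem_univ _)
          intro γ hγ γ' hγ' hee
          simp only [Finset.coe_filter, Set.mem_setOf_eq] at hγ hγ'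
          obtain ⟨hγS, hγt⟩ := hγ
          obtain ⟨hγ'S, hγ't⟩ := hγ'
          have k1 := key γ hγS
          have k2 := key γ' hγ'S
          rw [hγt] at k1
          rw [hγ't] at k2
          simp only at hee
          have e1 : γ j1 = γ' j1 := by
            apply ch_injective μ
            apply mul_left_cancel₀ ha1
            rw [hee] at k1
            linear_combination k1 - k2
          funext k
          by_cases hk1 : k = j1
          · rw [hk1]; exact e1
          · by_cases hk2 : k = j2
            · rw [hk2]; exact hee
            · have e2 := congrFun hγt ⟨k, hk1, hk2⟩
              have e3 := congrFun hγ't ⟨k, hk1, hk2⟩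
              simp only [hπ] at e2 e3
              rw [e2, e3]
        simpa [ZMod.card] using hcard
      -- fibers over points with cc t ≠ 0 have at most 2 elements
      have fib_le2 : ∀ t, cc t ≠ 0 → (S.filter (fun γ => π γ = t)).card ≤ 2 := by
        intro t hct
        obtain ⟨w1, w2, hw⟩ := two_circles ‖a j1‖ ‖a j2‖ (cc t) hct
        have hcard : (S.filter (fun γ => π γ = t)).card ≤ ({w1, w2} : Finset ℂ).card := by
          apply Finset.card_le_card_of_injOn (fun γ => a j1 * ch μ (γ j1))
          · intro γ hγ
            simp only [Finset.coe_filter, Set.mem_setOf_eq] at hγ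
            obtain ⟨hγS, hγt⟩ := hγ
            have k1 := key γ hγS
            rw [hγt] at k1
            have hz1 : ‖a j1 * ch μ (γ j1)‖ = ‖a j1‖ := by
              rw [norm_mul, abs_ch, mul_one]
            have hz2 : ‖a j1 * ch μ (γ j1) - cc t‖ = ‖a j2‖ := by
              have : a j1 * ch μ (γ j1) - cc t = -(a j2 * ch μ (γ j2)) := by
                linear_combination k1
              rw [this, norm_neg, norm_mul, abs_ch, mul_one]
            rcases hw _ hz1 hz2 with h|h
            · simp [h]
            · simp [h]
          · intro γ hγ γ' hγ' hee
            simp only [Finset.coe_filter, Set.mem_setOf_eq] at hγ hγ'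
            obtain ⟨hγS, hγt⟩ := hγ
            obtain ⟨hγ'S, hγ't⟩ := hγ'
            have k1 := key γ hγS
            have k2 := key γ' hγ'S
            rw [hγt] at k1
            rw [hγ't] at k2
            simp only at hee
            have e1 : γ j1 = γ' j1 := ch_injective μ (mul_left_cancel₀ ha1 hee)
            have e2 : γ j2 = γ' j2 := by
              apply ch_injective μ
              apply mul_left_cancel₀ ha2
              rw [hee] at k1
              linear_combination k1 - k2
            funext k
            by_cases hk1 : k = j1
            · rw [hk1]; exact e1
            · by_cases hk2 : k = j2
              · rw [hk2]; exact e2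
              · have e3 := congrFun hγt ⟨k, hk1, hk2⟩
                have e4 := congrFun hγ't ⟨k, hk1, hk2⟩
                simp only [hπ] at e3 e4
                rw [e3, e4]
        calc (S.filter (fun γ => π γ = t)).card ≤ ({w1, w2} : Finset ℂ).card := hcard
          _ ≤ ({w2} : Finset ℂ).card + 1 := Finset.card_insert_le _ _
          _ ≤ 2 := by simp
      -- the bad set
      have hBdef : (Finset.univ.filter (fun t => cc t = 0) : Finset ({k : Fin d // k ≠ j1 ∧ k ≠ j2} → ZMod μ)) = Finset.univ.filter (fun t => cc t = 0) := rfl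
      have hcardT : Fintype.card {k : Fin d // k ≠ j1 ∧ k ≠ j2} = d - 2 := by
        rw [Fintype.card_subtype]
        have hfil : Finset.univ.filter (fun k : Fin d => k ≠ j1 ∧ k ≠ j2)
            = Finset.univ \ {j1, j2} := by
          ext k
          simp only [Finset.mem_filter, Finset.mem_univ, true_and, Finset.mem_sdiff,
            Finset.mem_insert, Finset.mem_singleton]
          tauto
        rw [hfil, Finset.card_sdiff_of_subset (Finset.subset_univ _), Finset.card_univ, Fintype.card_fin,
          Finset.card_pair hj12]
      have hcardfun : Fintype.card ({k : Fin d // k ≠ j1 ∧ k ≠ j2} → ZMod μ) = μ ^ (d - 2) := by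
        rw [Fintype.card_fun, ZMod.card, hcardT]
      have hBμ : (Finset.univ.filter (fun t => cc t = 0)).card * μ ≤ μ ^ (d - 2) := by
        by_cases h3 : ∃ j3, j3 ≠ j1 ∧ j3 ≠ j2 ∧ a j3 ≠ 0
        · obtain ⟨j3, h31, h32, ha3⟩ := h3
          have hd3 : 1 ≤ d - 2 := by
            rw [← hcardT]
            exact Fintype.card_pos_iff.mpr ⟨⟨j3, h31, h32⟩⟩
          have hinj : (Finset.univ.filter (fun t => cc t = 0)).card ≤ Fintype.card
              ({k : {k : Fin d // k ≠ j1 ∧ k ≠ j2} // k ≠ (⟨j3, h31, h32⟩ : {k : Fin d // k ≠ j1 ∧ k ≠ j2})} → ZMod μ) := by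
            rw [← Finset.card_univ]
            apply Finset.card_le_card_of_injOn
              (fun t (k : {k : {k : Fin d // k ≠ j1 ∧ k ≠ j2} // k ≠ ⟨j3, h31, h32⟩}) => t k.1)
              (fun _ _ => Finset.mem_univ _)
            intro t htB t' ht'B hee
            simp only [Finset.coe_filter, Set.mem_setOf_eq, hcc] at htB ht'B
            have hsum1 : ∑ k : {k : Fin d // k ≠ j1 ∧ k ≠ j2}, a k.1 * ch μ (t k)
                = ∑ k : {k : Fin d // k ≠ j1 ∧ k ≠ j2}, a k.1 * ch μ (t' k) := by
              linear_combination ht'B.2 - htB.2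
            rw [← Finset.add_sum_erase _ _ (Finset.mem_univ (⟨j3, h31, h32⟩ : {k : Fin d // k ≠ j1 ∧ k ≠ j2})),
                ← Finset.add_sum_erase _ _ (Finset.mem_univ (⟨j3, h31, h32⟩ : {k : Fin d // k ≠ j1 ∧ k ≠ j2}))] at hsum1
            have htail : ∑ k ∈ Finset.univ.erase (⟨j3, h31, h32⟩ : {k : Fin d // k ≠ j1 ∧ k ≠ j2}), a k.1 * ch μ (t k)
                = ∑ k ∈ Finset.univ.erase (⟨j3, h31, h32⟩ : {k : Fin d // k ≠ j1 ∧ k ≠ j2}), a k.1 * ch μ (t' k) := by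
              apply Finset.sum_congr rfl
              intro k hk
              have hk3 := (Finset.mem_erase.1 hk).1
              have e5 := congrFun hee ⟨k, hk3⟩
              simp only at e5
              rw [e5]
            rw [htail] at hsum1
            have e6 : t ⟨j3, h31, h32⟩ = t' ⟨j3, h31, h32⟩ := by
              apply ch_injective μ
              apply mul_left_cancel₀ ha3
              exact add_right_cancel hsum1
            funext k
            by_cases hk : k = ⟨j3, h31, h32⟩
            · rw [hk]; exact e6
            · exact congrFun hee ⟨k, hk⟩
          have hcard2 : Fintype.card
              ({k : {k : Fin d // k ≠ j1 ∧ k ≠ j2} // k ≠ (⟨j3, h31, h32⟩ : {k : Fin d // k ≠ j1 ∧ k ≠ j2})} → ZMod μ)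
              = μ ^ (d - 2 - 1) := by
            rw [Fintype.card_fun, ZMod.card]
            congr 1
            have h : Fintype.card {k : {k : Fin d // k ≠ j1 ∧ k ≠ j2} // ¬ (k = ⟨j3, h31, h32⟩)}
                = Fintype.card {k : Fin d // k ≠ j1 ∧ k ≠ j2}
                  - Fintype.card {k : {k : Fin d // k ≠ j1 ∧ k ≠ j2} // k = ⟨j3, h31, h32⟩} :=
              Fintype.card_subtype_compl _
            rw [Fintype.card_subtype_eq, hcardT] at h
            exact h
          rw [hcard2] at hinj
          calc (Finset.univ.filter (fun t => cc t = 0)).card * μ ≤ μ ^ (d - 2 - 1) * μ := Nat.mul_le_mul_right μ hinj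
            _ = μ ^ (d - 2) := by
              rw [← pow_succ]
              congr 1
              omega
        · -- all other coordinates vanish, so cc is the constant a j1 + a j2 ≠ 0
          push_neg at h3
          have hsum : a j1 + a j2 ≠ 0 := by
            intro h0
            exact absurd h0 (h2 (fun k hk1 hk2 => h3 k hk1 hk2))
          have hBempty : (Finset.univ.filter (fun t => cc t = 0) : Finset ({k : Fin d // k ≠ j1 ∧ k ≠ j2} → ZMod μ)) = ∅ := by
            rw [Finset.filter_eq_empty_iff]
            intro t _
            have hsub : ∑ k : {k : Fin d // k ≠ j1 ∧ k ≠ j2}, a k.1 * ch μ (t k) = 0 :=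
              Finset.sum_eq_zero fun k _ => by rw [h3 k.1 k.2.1 k.2.2, zero_mul]
            have htot : ∑ j, a j = a j1 + a j2 := by
              rw [sum_split a j1 j2 hj12, Finset.sum_eq_zero fun k _ => h3 k.1 k.2.1 k.2.2,
                zero_add]
            simp only [hcc]
            rw [hsub, htot, sub_zero]
            exact hsum
          rw [hBempty]
          simp
      -- put everything together
      rw [Finset.card_eq_sum_card_fiberwise (f := π)
        (t := (Finset.univ : Finset ({k : Fin d // k ≠ j1 ∧ k ≠ j2} → ZMod μ)))
        (fun x _ => Finset.mem_univ _)]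
      rw [← Finset.sum_filter_add_sum_filter_not Finset.univ (fun t => cc t = 0)
        (fun t => (S.filter (fun γ => π γ = t)).card)]
      have b1 : ∑ t ∈ Finset.univ.filter (fun t => cc t = 0), (S.filter (fun γ => π γ = t)).card ≤ (Finset.univ.filter (fun t => cc t = 0)).card * μ := by
        calc ∑ t ∈ Finset.univ.filter (fun t => cc t = 0), (S.filter (fun γ => π γ = t)).card ≤ (Finset.univ.filter (fun t => cc t = 0)).card • μ :=
              Finset.sum_le_card_nsmul _ _ μ (fun t _ => fib_le t)
          _ = (Finset.univ.filter (fun t => cc t = 0)).card * μ := by rw [smul_eq_mul]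
      have b2 : ∑ t ∈ Finset.univ.filter (fun t => ¬ cc t = 0),
          (S.filter (fun γ => π γ = t)).card ≤ μ ^ (d - 2) * 2 := by
        calc ∑ t ∈ Finset.univ.filter (fun t => ¬ cc t = 0), (S.filter (fun γ => π γ = t)).card
            ≤ (Finset.univ.filter (fun t => ¬ cc t = 0)).card • 2 :=
              Finset.sum_le_card_nsmul _ _ 2
                (fun t ht => fib_le2 t (Finset.mem_filter.1 ht).2)
          _ ≤ μ ^ (d - 2) * 2 := by
              have hle : (Finset.univ.filter (fun t => ¬ cc t = 0)).card ≤ μ ^ (d - 2) := by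
                refine le_trans (Finset.card_filter_le _ _) ?_
                rw [Finset.card_univ, hcardfun]
              simpa [smul_eq_mul] using Nat.mul_le_mul_right 2 hle
      have := add_le_add b1 b2
      omega

end TracePaper
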